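/- Let J_m be the Bessel function of the first kind of integer order m, and let f(r) = J_m(r)² · r. If 0 < r < m, then f'(r) > 0 and f''(r) > 0; that is, f is strictly increasing and strictly convex on the interval (0, m). -/

import Mathlib

/-- The Bessel function of the first kind of integer order `m`,
defined by its power series. -/
noncomputable def besselJ (m : ℕ) (x : ℝ) : ℝ :=
  ∑' n : ℕ, ((-1 : ℝ) ^ n / (n.factorial * (n + m).factorial)) * (x / 2) ^ (2 * n + m)

open Filter Set Topology

namespace BesselAux

noncomputable def co (m n : ℕ) : ℝ := (-1 : ℝ) ^ n / (n.factorial * (n + m).factorial)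

noncomputable def T0 (m n : ℕ) (x : ℝ) : ℝ := co m n * (x / 2) ^ (2 * n + m)

noncomputable def T1 (m n : ℕ) (x : ℝ) : ℝ :=
  co m n * (((2 * n + m : ℕ) : ℝ) * (x / 2) ^ (2 * n + m - 1) * (1 / 2))

noncomputable def T2 (m n : ℕ) (x : ℝ) : ℝ :=
  co m n * (((2 * n + m : ℕ) : ℝ) *
    (((2 * n + m - 1 : ℕ) : ℝ) * (x / 2) ^ (2 * n + m - 1 - 1) * (1 / 2)) * (1 / 2))

lemma hasDerivAt_half_pow (j : ℕ) (x : ℝ) :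
    HasDerivAt (fun y : ℝ => (y / 2) ^ j) (((j : ℕ) : ℝ) * (x / 2) ^ (j - 1) * (1 / 2)) x := by
  have h := ((hasDerivAt_id x).div_const 2).fun_pow j
  simpa using h

lemma hasDerivAt_T0 (m n : ℕ) (x : ℝ) : HasDerivAt (fun y => T0 m n y) (T1 m n x) x := by
  have h := (hasDerivAt_half_pow (2 * n + m) x).const_mul (co m n)
  simpa [T0, T1] using h

lemma hasDerivAt_T1 (m n : ℕ) (x : ℝ) : HasDerivAt (fun y => T1 m n y) (T2 m n x) x := by
  have h := (((hasDerivAt_half_pow (2 * n + m - 1) x).const_mul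
      (((2 * n + m : ℕ) : ℝ))).mul_const (1 / 2)).const_mul (co m n)
  simpa [T1, T2] using h

lemma abs_co (m n : ℕ) : |co m n| = 1 / (n.factorial * (n + m).factorial) := by
  rw [co, abs_div, abs_pow, abs_neg, abs_one, one_pow]
  congr 1
  rw [abs_of_nonneg]
  positivity

lemma summable_U (m : ℕ) (C : ℝ) (hC : 0 ≤ C) :
    Summable (fun n : ℕ => C ^ (2 * n + m) / (n.factorial * (n + m).factorial)) := by
  have hg : Summable (fun n : ℕ => C ^ m * ((C ^ 2) ^ n / n.factorial)) :=
    (Real.summable_pow_div_factorial (C ^ 2)).mul_left (C ^ m)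
  refine hg.of_nonneg_of_le (fun n => by positivity) (fun n => ?_)
  have h1 : (1 : ℝ) ≤ (n + m).factorial := by exact_mod_cast (n + m).factorial_pos
  have h2 : (0 : ℝ) < n.factorial := by exact_mod_cast n.factorial_pos
  calc C ^ (2 * n + m) / (n.factorial * (n + m).factorial)
      ≤ C ^ (2 * n + m) / (n.factorial * 1) := by
        have h3 : (n.factorial : ℝ) * 1 ≤ (n.factorial : ℝ) * (n + m).factorial := by
          nlinarith
        gcongr
    _ = C ^ m * ((C ^ 2) ^ n / n.factorial) := by
        rw [pow_add, pow_mul]; ring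

lemma cast_le_two_pow (k : ℕ) : (k : ℝ) ≤ 2 ^ k := by
  have := Nat.lt_two_pow_self (n := k)
  exact_mod_cast this.le

set_option maxHeartbeats 1000000 in
lemma T_bounds (m n : ℕ) (R x : ℝ) (hR : 0 ≤ R) (hx : |x| ≤ R) :
    |T0 m n x| ≤ (4 * (R + 1)) ^ (2 * n + m) / (n.factorial * (n + m).factorial) ∧
    |T1 m n x| ≤ (4 * (R + 1)) ^ (2 * n + m) / (n.factorial * (n + m).factorial) ∧
    |T2 m n x| ≤ (4 * (R + 1)) ^ (2 * n + m) / (n.factorial * (n + m).factorial) := by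
  set k := 2 * n + m with hk
  set P : ℝ := (R + 1) ^ k with hP
  set Q : ℝ := 2 ^ k with hQ
  have hy : |x / 2| ≤ R + 1 := by
    rw [abs_div, abs_two]
    have h0 : |x| / 2 ≤ R := by linarith [abs_nonneg x]
    linarith
  have hy0 : (0 : ℝ) ≤ |x / 2| := abs_nonneg _
  have hR1 : (1 : ℝ) ≤ R + 1 := by linarith
  have hpow : ∀ j : ℕ, j ≤ k → |x / 2| ^ j ≤ P := fun j hj =>
    le_trans (pow_le_pow_left₀ hy0 hy j) (pow_le_pow_right₀ hR1 hj)
  have hden : (0 : ℝ) < n.factorial * (n + m).factorial := by positivity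
  have b0 : |x / 2| ^ k ≤ P := hpow k le_rfl
  have b1 : |x / 2| ^ (k - 1) ≤ P := hpow _ (Nat.sub_le _ _)
  have b2 : |x / 2| ^ (k - 1 - 1) ≤ P := hpow _ (le_trans (Nat.sub_le _ _) (Nat.sub_le _ _))
  have c1 : ((k : ℕ) : ℝ) ≤ Q := cast_le_two_pow k
  have c2 : ((k - 1 : ℕ) : ℝ) ≤ Q := by
    refine le_trans ?_ c1
    exact_mod_cast Nat.sub_le k 1
  have hQ1 : (1 : ℝ) ≤ Q := one_le_pow₀ (by norm_num : (1:ℝ) ≤ 2)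
  have hP0 : (0 : ℝ) ≤ P := by positivity
  have hQ0 : (0 : ℝ) < Q := by positivity
  have hfin : (4 * (R + 1)) ^ k = Q * Q * P := by
    rw [hP, hQ, ← mul_pow, ← mul_pow]; norm_num
  have key1 : ((k : ℕ) : ℝ) * |x / 2| ^ (k - 1) ≤ Q * P :=
    mul_le_mul c1 b1 (by positivity) hQ0.le
  have key2 : ((k - 1 : ℕ) : ℝ) * |x / 2| ^ (k - 1 - 1) ≤ Q * P :=
    mul_le_mul c2 b2 (by positivity) hQ0.le
  have hknn : (0 : ℝ) ≤ ((k : ℕ) : ℝ) := Nat.cast_nonneg k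
  have key3 : ((k : ℕ) : ℝ) * (Q * P) ≤ Q * (Q * P) :=
    mul_le_mul_of_nonneg_right c1 (by positivity)
  have habs12 : |(1 : ℝ) / 2| = 1 / 2 := by norm_num
  have hw0 : (0 : ℝ) ≤ ((k - 1 : ℕ) : ℝ) * |x / 2| ^ (k - 1 - 1) := by positivity
  have key4 : ((k : ℕ) : ℝ) * (((k - 1 : ℕ) : ℝ) * |x / 2| ^ (k - 1 - 1)) ≤ Q * (Q * P) :=
    mul_le_mul c1 key2 hw0 hQ0.le
  have hQP : (0 : ℝ) ≤ Q * P := by positivity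
  refine ⟨?_, ?_, ?_⟩
  · rw [T0, abs_mul, abs_co, abs_pow, hfin, div_mul_eq_mul_div, one_mul]
    refine (div_le_div_iff_of_pos_right hden).mpr ?_
    nlinarith [b0, hP0, hQ1, hQ0]
  · rw [T1, abs_mul, abs_co, abs_mul, abs_mul, abs_pow, Nat.abs_cast, habs12, hfin,
      div_mul_eq_mul_div, one_mul]
    refine (div_le_div_iff_of_pos_right hden).mpr ?_
    nlinarith [key1, hQ1, hQP, hQ0, mul_nonneg hknn (pow_nonneg hy0 (k - 1))]
  · rw [T2, abs_mul, abs_co, abs_mul, abs_mul, abs_mul, abs_mul, abs_pow, Nat.abs_cast,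
      Nat.abs_cast, habs12, hfin, div_mul_eq_mul_div, one_mul]
    refine (div_le_div_iff_of_pos_right hden).mpr ?_
    nlinarith [key4, mul_nonneg hknn hw0]

lemma summable_T0 (m : ℕ) (x : ℝ) : Summable (fun n => T0 m n x) :=
  (summable_U m (4 * (|x| + 1)) (by positivity)).of_norm_bounded
    (fun n => (T_bounds m n |x| x (abs_nonneg x) le_rfl).1)

lemma summable_T1 (m : ℕ) (x : ℝ) : Summable (fun n => T1 m n x) :=
  (summable_U m (4 * (|x| + 1)) (by positivity)).of_norm_bounded
    (fun n => (T_bounds m n |x| x (abs_nonneg x) le_rfl).2.1)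

lemma summable_T2 (m : ℕ) (x : ℝ) : Summable (fun n => T2 m n x) :=
  (summable_U m (4 * (|x| + 1)) (by positivity)).of_norm_bounded
    (fun n => (T_bounds m n |x| x (abs_nonneg x) le_rfl).2.2)

noncomputable def Jd (m : ℕ) (x : ℝ) : ℝ := ∑' n, T1 m n x
noncomputable def Jdd (m : ℕ) (x : ℝ) : ℝ := ∑' n, T2 m n x

end BesselAux

namespace BesselAux

lemma besselJ_eq (m : ℕ) (x : ℝ) : besselJ m x = ∑' n, T0 m n x := rfl

lemma hasDerivAt_besselJ (m : ℕ) (x : ℝ) : HasDerivAt (besselJ m) (Jd m x) x := by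
  have hopen : IsOpen (Metric.ball (0:ℝ) (|x| + 1)) := Metric.isOpen_ball
  have hx : x ∈ Metric.ball (0:ℝ) (|x| + 1) := by
    simp [Real.dist_eq]
  have h1 : TendstoUniformlyOn (fun N y => ∑ n ∈ Finset.range N, T1 m n y)
      (fun y => ∑' n, T1 m n y) atTop (Metric.ball (0:ℝ) (|x| + 1)) := by
    refine tendstoUniformlyOn_tsum_nat
      (summable_U m (4 * ((|x| + 1) + 1)) (by positivity)) (fun n y hy => ?_)
    have hy' : |y| ≤ |x| + 1 := by
      simp [Real.dist_eq] at hy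
      linarith
    simpa using (T_bounds m n (|x| + 1) y (by positivity) hy').2.1
  have h2 : ∀ᶠ N in Filter.atTop, ∀ y ∈ Metric.ball (0:ℝ) (|x| + 1),
      HasDerivAt (fun z => ∑ n ∈ Finset.range N, T0 m n z)
        (∑ n ∈ Finset.range N, T1 m n y) y :=
    Eventually.of_forall fun N y _ => HasDerivAt.fun_sum fun n _ => hasDerivAt_T0 m n y
  have h3 : ∀ y ∈ Metric.ball (0:ℝ) (|x| + 1),
      Tendsto (fun N => ∑ n ∈ Finset.range N, T0 m n y) atTop (𝓝 (besselJ m y)) :=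
    fun y _ => (summable_T0 m y).hasSum.tendsto_sum_nat
  exact hasDerivAt_of_tendstoUniformlyOn hopen h1 h2 h3 hx

lemma hasDerivAt_Jd (m : ℕ) (x : ℝ) : HasDerivAt (Jd m) (Jdd m x) x := by
  have hopen : IsOpen (Metric.ball (0:ℝ) (|x| + 1)) := Metric.isOpen_ball
  have hx : x ∈ Metric.ball (0:ℝ) (|x| + 1) := by
    simp [Real.dist_eq]
  have h1 : TendstoUniformlyOn (fun N y => ∑ n ∈ Finset.range N, T2 m n y)
      (fun y => ∑' n, T2 m n y) atTop (Metric.ball (0:ℝ) (|x| + 1)) := by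
    refine tendstoUniformlyOn_tsum_nat
      (summable_U m (4 * ((|x| + 1) + 1)) (by positivity)) (fun n y hy => ?_)
    have hy' : |y| ≤ |x| + 1 := by
      simp [Real.dist_eq] at hy
      linarith
    simpa using (T_bounds m n (|x| + 1) y (by positivity) hy').2.2
  have h2 : ∀ᶠ N in Filter.atTop, ∀ y ∈ Metric.ball (0:ℝ) (|x| + 1),
      HasDerivAt (fun z => ∑ n ∈ Finset.range N, T1 m n z)
        (∑ n ∈ Finset.range N, T2 m n y) y :=
    Eventually.of_forall fun N y _ => HasDerivAt.fun_sum fun n _ => hasDerivAt_T1 m n y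
  have h3 : ∀ y ∈ Metric.ball (0:ℝ) (|x| + 1),
      Tendsto (fun N => ∑ n ∈ Finset.range N, T1 m n y) atTop (𝓝 (Jd m y)) :=
    fun y _ => (summable_T1 m y).hasSum.tendsto_sum_nat
  exact hasDerivAt_of_tendstoUniformlyOn hopen h1 h2 h3 hx

lemma ode (m : ℕ) (hm : 1 ≤ m) (x : ℝ) :
    x ^ 2 * Jdd m x + x * Jd m x + (x ^ 2 - (m : ℝ) ^ 2) * besselJ m x = 0 := by
  have h0 := summable_T0 m x
  have h1 := summable_T1 m x
  have h2 := summable_T2 m x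
  set E : ℕ → ℝ := fun n =>
    x ^ 2 * T2 m n x + x * T1 m n x + (x ^ 2 - (m : ℝ) ^ 2) * T0 m n x with hE
  set D : ℕ → ℝ := fun n => co m n * 4 * (x / 2) ^ (2 * n + m + 2) with hD
  have hEs : Summable E := ((h2.mul_left _).add (h1.mul_left _)).add (h0.mul_left _)
  have hDs : Summable D := by
    refine ((h0.mul_left (4 * (x / 2) ^ 2)).congr fun n => ?_)
    simp only [hD, T0]
    rw [pow_add]
    ring
  have hsum : x ^ 2 * Jdd m x + x * Jd m x + (x ^ 2 - (m : ℝ) ^ 2) * besselJ m x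
      = ∑' n, E n := by
    rw [besselJ_eq]
    unfold Jd Jdd
    rw [← tsum_mul_left, ← tsum_mul_left, ← tsum_mul_left,
      ← Summable.tsum_add (h2.mul_left _) (h1.mul_left _),
      ← Summable.tsum_add ((h2.mul_left _).add (h1.mul_left _)) (h0.mul_left _)]
  have hE0 : E 0 = D 0 := by
    obtain ⟨m', rfl⟩ : ∃ m', m = m' + 1 := ⟨m - 1, by omega⟩
    rcases m' with _ | m''
    · simp only [hE, hD, T0, T1, T2, co]
      norm_num
      ring
    · have e1 : 2 * 0 + (m'' + 1 + 1) = m'' + 2 := by omega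
      have e2 : m'' + 2 - 1 = m'' + 1 := by omega
      have e3 : m'' + 2 - 1 - 1 = m'' := by omega
      have e4 : 2 * 0 + (m'' + 1 + 1) + 2 = m'' + 4 := by omega
      simp only [hE, hD, T0, T1, T2, co, e1, e4]
      simp only [e2, e3]
      have p1 : (x / 2) ^ (m'' + 2) = (x / 2) ^ m'' * (x / 2) ^ 2 := by rw [pow_add]
      have p2 : (x / 2) ^ (m'' + 1) = (x / 2) ^ m'' * (x / 2) ^ 1 := by rw [pow_add]
      have p3 : (x / 2) ^ (m'' + 4) = (x / 2) ^ m'' * (x / 2) ^ 4 := by rw [pow_add]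
      rw [p1, p2, p3]
      push_cast
      ring
  have hEsucc : ∀ n, E (n + 1) = D (n + 1) - D n := by
    intro n
    have e1 : 2 * (n + 1) + m = (2 * n + m) + 2 := by omega
    have e2 : 2 * n + m + 2 - 1 = (2 * n + m) + 1 := by omega
    have e3 : 2 * n + m + 2 - 1 - 1 = 2 * n + m := by omega
    have e4 : 2 * (n + 1) + m + 2 = (2 * n + m) + 4 := by omega
    have e5 : n + 1 + m = (n + m) + 1 := by omega
    have f1 : ((n.factorial : ℝ)) ≠ 0 := by positivity
    have f2 : (((n + m).factorial : ℝ)) ≠ 0 := by positivity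
    have g1 : ((n : ℝ) + 1) ≠ 0 := by positivity
    have g2 : ((n : ℝ) + (m : ℝ) + 1) ≠ 0 := by positivity
    simp only [hE, hD, T0, T1, T2, co, e1, e4, e5, Nat.factorial_succ]
    simp only [e2, e3]
    have p1 : (x / 2) ^ (2 * n + m + 2) = (x / 2) ^ (2 * n + m) * (x / 2) ^ 2 := by
      rw [pow_add]
    have p2 : (x / 2) ^ (2 * n + m + 1) = (x / 2) ^ (2 * n + m) * (x / 2) ^ 1 := by
      rw [pow_add]
    have p3 : (x / 2) ^ (2 * n + m + 4) = (x / 2) ^ (2 * n + m) * (x / 2) ^ 4 := by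
      rw [pow_add]
    rw [p1, p2, p3]
    push_cast
    field_simp
    ring
  have hpart : ∀ N, ∑ n ∈ Finset.range (N + 1), E n = D N := by
    intro N
    induction N with
    | zero => simpa using hE0
    | succ k ih => rw [Finset.sum_range_succ, ih, hEsucc]; ring
  have hfun : (fun N => ∑ n ∈ Finset.range (N + 1), E n) = D := funext hpart
  have hlim1 : Tendsto (fun N => ∑ n ∈ Finset.range (N + 1), E n) atTop (𝓝 (∑' n, E n)) :=
    hEs.hasSum.tendsto_sum_nat.comp (tendsto_add_atTop_nat 1)
  rw [hfun] at hlim1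
  have : ∑' n, E n = 0 := tendsto_nhds_unique hlim1 hDs.tendsto_atTop_zero
  rw [hsum, this]

set_option maxHeartbeats 1000000 in
lemma Jd_pos_near (m : ℕ) (hm : 1 ≤ m) :
    ∃ ε > 0, ∀ x : ℝ, 0 < x → x < ε → 0 < Jd m x := by
  set w : ℕ → ℝ := fun n => (4 : ℝ) ^ (2 * (n + 1) + m) /
    ((n + 1).factorial * (n + 1 + m).factorial) with hw
  have hws : Summable w := by
    have := summable_U m 4 (by norm_num)
    exact (summable_nat_add_iff 1).2 this
  set K : ℝ := ∑' n, w n with hK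
  have hK0 : 0 ≤ K := tsum_nonneg fun n => by positivity
  have hm0 : (0 : ℝ) < m := by exact_mod_cast hm
  have hfac : (0 : ℝ) < m.factorial := by exact_mod_cast m.factorial_pos
  set δ : ℝ := min 1 ((m : ℝ) / (2 * m.factorial * (K + 1))) with hδ
  have hδ0 : 0 < δ := lt_min one_pos (by positivity)
  have hδ1 : δ ≤ 1 := min_le_left _ _
  refine ⟨2 * δ, by positivity, fun x hx hxε => ?_⟩
  set y : ℝ := x / 2 with hy
  have hy0 : 0 < y := by positivity
  have hyδ : y < δ := by rw [hy]; linarith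
  have hy1 : y < 1 := lt_of_lt_of_le hyδ hδ1
  -- head term
  have hhead : T1 m 0 x = (m : ℝ) / (2 * m.factorial) * y ^ (m - 1) := by
    have e : 2 * 0 + m = m := by omega
    simp only [T1, co, e, pow_zero, Nat.factorial_zero, Nat.cast_one, one_mul, Nat.zero_add,
      Nat.cast_ofNat]
    rw [← hy]
    ring
  -- tail bound
  have hstep : ∀ n, |T1 m (n + 1) x| ≤ y ^ (m + 1) * w n := by
    intro n
    have e : 2 * (n + 1) + m - 1 = (m + 1) + 2 * n := by omega
    have hq : y ^ (2 * n) ≤ 1 := pow_le_one₀ hy0.le hy1.le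
    have hk4 : ((2 * (n + 1) + m : ℕ) : ℝ) ≤ 4 ^ (2 * (n + 1) + m) := by
      refine le_trans (cast_le_two_pow _) ?_
      exact pow_le_pow_left₀ (by norm_num) (by norm_num) _
    have hden : (0 : ℝ) < (n + 1).factorial * (n + 1 + m).factorial := by positivity
    have hnn : (0 : ℝ) ≤ ((2 * (n + 1) + m : ℕ) : ℝ) * (x / 2) ^ (2 * (n + 1) + m - 1) * (1 / 2) := by
      positivity
    rw [T1, abs_mul, abs_co, abs_of_nonneg hnn, e, pow_add, ← hy]
    calc 1 / ((n + 1).factorial * (n + 1 + m).factorial : ℝ) *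
          (((2 * (n + 1) + m : ℕ) : ℝ) * (y ^ (m + 1) * y ^ (2 * n)) * (1 / 2))
        = y ^ (m + 1) * ((((2 * (n + 1) + m : ℕ) : ℝ) * y ^ (2 * n)) /
            (2 * ((n + 1).factorial * (n + 1 + m).factorial))) := by ring
      _ ≤ y ^ (m + 1) * ((4 : ℝ) ^ (2 * (n + 1) + m) /
            ((n + 1).factorial * (n + 1 + m).factorial)) := by
          refine mul_le_mul_of_nonneg_left ?_ (by positivity)
          have hnum : ((2 * (n + 1) + m : ℕ) : ℝ) * y ^ (2 * n) ≤
              (4 : ℝ) ^ (2 * (n + 1) + m) := by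
            nlinarith [(by positivity : (0:ℝ) ≤ ((2 * (n + 1) + m : ℕ) : ℝ)), pow_nonneg hy0.le (2 * n), hq, hk4]
          have h2d : ((n + 1).factorial * (n + 1 + m).factorial : ℝ) ≤
              2 * ((n + 1).factorial * (n + 1 + m).factorial) := by linarith
          exact div_le_div₀ (by positivity) hnum hden h2d
      _ = y ^ (m + 1) * w n := rfl
  have htails : Summable fun n => T1 m (n + 1) x := (summable_nat_add_iff 1).2 (summable_T1 m x)
  have htail : |∑' n, T1 m (n + 1) x| ≤ y ^ (m + 1) * K := by
    have habs : Summable (fun n => ‖T1 m (n + 1) x‖) := by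
      simpa [Real.norm_eq_abs] using htails.abs
    have h1 : ‖∑' n, T1 m (n + 1) x‖ ≤ ∑' n, ‖T1 m (n + 1) x‖ :=
      norm_tsum_le_tsum_norm habs
    rw [Real.norm_eq_abs] at h1
    refine le_trans h1 ?_
    rw [hK, ← tsum_mul_left]
    refine Summable.tsum_le_tsum (fun n => ?_) habs (hws.mul_left _)
    rw [Real.norm_eq_abs]
    exact hstep n
  have hsplit : Jd m x = T1 m 0 x + ∑' n, T1 m (n + 1) x := Summable.tsum_eq_zero_add (summable_T1 m x)
  -- key inequality
  have hepow : y ^ (m + 1) = y ^ (m - 1) * y ^ 2 := by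
    rw [← pow_add]
    congr 1
    omega
  have hy2K : y ^ 2 * K < (m : ℝ) / (2 * m.factorial) := by
    have h1 : y * (K + 1) < δ * (K + 1) := by
      apply mul_lt_mul_of_pos_right hyδ
      linarith
    have h2 : δ * (K + 1) ≤ (m : ℝ) / (2 * m.factorial) := by
      have h3 : δ ≤ (m : ℝ) / (2 * m.factorial * (K + 1)) := min_le_right _ _
      calc δ * (K + 1) ≤ (m : ℝ) / (2 * m.factorial * (K + 1)) * (K + 1) :=
            mul_le_mul_of_nonneg_right h3 (by positivity)
        _ = (m : ℝ) / (2 * m.factorial) := by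
            field_simp
    nlinarith [h1, h2, hy0, hy1, hK0,
      mul_nonneg (mul_nonneg hy0.le (sub_nonneg.2 hy1.le)) hK0]
  have hcomp : y ^ (m + 1) * K < (m : ℝ) / (2 * m.factorial) * y ^ (m - 1) := by
    rw [hepow]
    have := mul_lt_mul_of_pos_left hy2K (pow_pos hy0 (m - 1))
    calc y ^ (m - 1) * y ^ 2 * K = y ^ (m - 1) * (y ^ 2 * K) := by ring
      _ < y ^ (m - 1) * ((m : ℝ) / (2 * m.factorial)) := this
      _ = (m : ℝ) / (2 * m.factorial) * y ^ (m - 1) := by ring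
  rw [hsplit, hhead]
  have := neg_abs_le (∑' n, T1 m (n + 1) x)
  linarith [htail, hcomp]

lemma besselJ_zero (m : ℕ) (hm : 1 ≤ m) : besselJ m 0 = 0 := by
  rw [besselJ_eq]
  have h : ∀ n : ℕ, T0 m n 0 = 0 := by
    intro n
    rw [T0, zero_div, zero_pow (by omega : 2 * n + m ≠ 0), mul_zero]
  rw [tsum_congr h, tsum_zero]

lemma continuous_Jd (m : ℕ) : Continuous (Jd m) :=
  continuous_iff_continuousAt.2 fun x => (hasDerivAt_Jd m x).continuousAt

lemma continuous_besselJ (m : ℕ) : Continuous (besselJ m) :=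
  continuous_iff_continuousAt.2 fun x => (hasDerivAt_besselJ m x).continuousAt

lemma deriv_besselJ (m : ℕ) : deriv (besselJ m) = Jd m :=
  funext fun x => (hasDerivAt_besselJ m x).deriv

lemma besselJ_pos_of (m : ℕ) (hm : 1 ≤ m) (b : ℝ) (hb : 0 < b)
    (h : ∀ t, 0 < t → t < b → 0 < Jd m t) : 0 < besselJ m b := by
  have hmono : StrictMonoOn (besselJ m) (Icc 0 b) := by
    refine strictMonoOn_of_deriv_pos (convex_Icc 0 b) (continuous_besselJ m).continuousOn ?_
    intro t ht
    rw [interior_Icc] at ht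
    rw [deriv_besselJ]
    exact h t ht.1 ht.2
  have := hmono (left_mem_Icc.2 hb.le) (right_mem_Icc.2 hb.le) hb
  rwa [besselJ_zero m hm] at this

lemma Jd_pos (m : ℕ) (hm : 1 ≤ m) : ∀ r ∈ Ioo (0:ℝ) (m:ℝ), 0 < Jd m r := by
  by_contra hcon
  push_neg at hcon
  obtain ⟨r0, hr0, hr0'⟩ := hcon
  set Z : Set ℝ := {r | r ∈ Ioo (0:ℝ) (m:ℝ) ∧ Jd m r ≤ 0} with hZ
  have hZne : Z.Nonempty := ⟨r0, hr0, hr0'⟩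
  have hZbdd : BddBelow Z := ⟨0, fun z hz => hz.1.1.le⟩
  set s := sInf Z with hs
  obtain ⟨ε, hε, hεpos⟩ := Jd_pos_near m hm
  have hsε : ε ≤ s := le_csInf hZne fun z hz => by
    by_contra h'
    push_neg at h'
    exact absurd hz.2 (not_le.2 (hεpos z hz.1.1 h'))
  have hs0 : 0 < s := lt_of_lt_of_le hε hsε
  have hsr0 : s ≤ r0 := csInf_le hZbdd ⟨hr0, hr0'⟩
  have hsm : s < (m:ℝ) := lt_of_le_of_lt hsr0 hr0.2
  have hsle : Jd m s ≤ 0 := by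
    have hcl : s ∈ closure Z := csInf_mem_closure hZne hZbdd
    have hclosed : IsClosed {r : ℝ | Jd m r ≤ 0} :=
      isClosed_le (continuous_Jd m) continuous_const
    exact closure_minimal (fun z hz => hz.2) hclosed hcl
  have hposlt : ∀ t, 0 < t → t < s → 0 < Jd m t := by
    intro t ht hts
    by_contra h'
    push_neg at h'
    have htZ : t ∈ Z := ⟨⟨ht, lt_trans hts hsm⟩, h'⟩
    exact absurd (csInf_le hZbdd htZ) (not_le.2 hts)
  have hge : 0 ≤ Jd m s := by
    have htend : Tendsto (Jd m) (𝓝[<] s) (𝓝 (Jd m s)) :=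
      ((continuous_Jd m).continuousAt).tendsto.mono_left nhdsWithin_le_nhds
    refine ge_of_tendsto htend ?_
    filter_upwards [Ioo_mem_nhdsLT_of_mem (⟨hs0, le_rfl⟩ : s ∈ Ioc (0:ℝ) s)] with t ht
    exact (hposlt t ht.1 ht.2).le
  have hJd0 : Jd m s = 0 := le_antisymm hsle hge
  have hJpos : 0 < besselJ m s := besselJ_pos_of m hm s hs0 hposlt
  have hode := ode m hm s
  have hm2 : 0 < (m:ℝ)^2 - s^2 := by nlinarith
  have hJdd : 0 < Jdd m s := by
    have hs2 : 0 < s^2 := by positivity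
    nlinarith [mul_pos hm2 hJpos]
  have hd := hasDerivAt_Jd m s
  rw [hasDerivAt_iff_tendsto_slope] at hd
  have hev : ∀ᶠ t in 𝓝[≠] s, 0 < slope (Jd m) s t := hd.eventually (eventually_gt_nhds hJdd)
  have hsub : 𝓝[<] s ≤ 𝓝[≠] s := nhdsWithin_mono s fun t ht => ne_of_lt ht
  have hev' : ∀ᶠ t in 𝓝[<] s, 0 < slope (Jd m) s t := hev.filter_mono hsub
  have hev2 : ∀ᶠ t in 𝓝[<] s, t ∈ Ioo (0:ℝ) s :=
    Ioo_mem_nhdsLT_of_mem (⟨hs0, le_rfl⟩ : s ∈ Ioc (0:ℝ) s)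
  obtain ⟨t, htslope, htIoo⟩ := (hev'.and hev2).exists
  rw [slope_def_field, hJd0, sub_zero] at htslope
  have hts : t - s < 0 := sub_neg.2 htIoo.2
  have hpos := hposlt t htIoo.1 htIoo.2
  have : Jd m t / (t - s) < 0 := div_neg_of_pos_of_neg hpos hts
  linarith

lemma besselJ_pos (m : ℕ) (hm : 1 ≤ m) : ∀ r ∈ Ioo (0:ℝ) (m:ℝ), 0 < besselJ m r :=
  fun r hr => besselJ_pos_of m hm r hr.1 fun t ht htr =>
    Jd_pos m hm t ⟨ht, htr.trans hr.2⟩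

end BesselAux

open BesselAux in
/-- For `f(r) = J_m(r)² r` and `0 < r < m`, one has `f'(r) > 0`
and `f''(r) > 0`; in particular `f` is strictly increasing and strictly convex
on `(0, m)`. -/
theorem besselJ_sq_mul_self_strict_mono_convex (m : ℕ) (hm : 1 ≤ m) :
    (∀ r ∈ Set.Ioo (0 : ℝ) (m : ℝ),
        0 < deriv (fun r : ℝ => (besselJ m r) ^ 2 * r) r ∧
        0 < deriv (deriv (fun r : ℝ => (besselJ m r) ^ 2 * r)) r) ∧
    StrictMonoOn (fun r : ℝ => (besselJ m r) ^ 2 * r) (Set.Ioo (0 : ℝ) (m : ℝ)) ∧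
    StrictConvexOn ℝ (Set.Ioo (0 : ℝ) (m : ℝ)) (fun r : ℝ => (besselJ m r) ^ 2 * r) := by
  have hg1 : ∀ r : ℝ, HasDerivAt (fun r : ℝ => (besselJ m r) ^ 2 * r)
      (2 * besselJ m r * Jd m r * r + besselJ m r ^ 2) r := by
    intro r
    have h := ((hasDerivAt_besselJ m r).fun_pow 2).fun_mul (hasDerivAt_id r)
    simp only [id] at h
    refine h.congr_deriv ?_
    norm_num
  have hd1 : deriv (fun r : ℝ => (besselJ m r) ^ 2 * r)
      = fun r => 2 * besselJ m r * Jd m r * r + besselJ m r ^ 2 :=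
    funext fun r => (hg1 r).deriv
  have hg2 : ∀ r : ℝ, HasDerivAt (fun r : ℝ => 2 * besselJ m r * Jd m r * r + besselJ m r ^ 2)
      (2 * Jd m r ^ 2 * r + 2 * besselJ m r * Jdd m r * r + 4 * besselJ m r * Jd m r) r := by
    intro r
    have h1 := (((hasDerivAt_besselJ m r).const_mul (2:ℝ)).fun_mul (hasDerivAt_Jd m r)).fun_mul
      (hasDerivAt_id r)
    have h2 := (hasDerivAt_besselJ m r).fun_pow 2
    have h := h1.fun_add h2
    simp only [id] at h
    refine h.congr_deriv ?_
    norm_num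
    ring
  have hd2 : deriv (deriv (fun r : ℝ => (besselJ m r) ^ 2 * r))
      = fun r => 2 * Jd m r ^ 2 * r + 2 * besselJ m r * Jdd m r * r
        + 4 * besselJ m r * Jd m r := by
    rw [hd1]
    exact funext fun r => (hg2 r).deriv
  have hpos1 : ∀ r ∈ Set.Ioo (0:ℝ) (m:ℝ),
      0 < 2 * besselJ m r * Jd m r * r + besselJ m r ^ 2 := by
    intro r hr
    have ha := besselJ_pos m hm r hr
    have hb := Jd_pos m hm r hr
    have hr0 := hr.1
    nlinarith [mul_pos (mul_pos (mul_pos (by norm_num : (0:ℝ) < 2) ha) hb) hr0, pow_pos ha 2]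
  have hpos2 : ∀ r ∈ Set.Ioo (0:ℝ) (m:ℝ),
      0 < 2 * Jd m r ^ 2 * r + 2 * besselJ m r * Jdd m r * r + 4 * besselJ m r * Jd m r := by
    intro r hr
    have ha := besselJ_pos m hm r hr
    have hb := Jd_pos m hm r hr
    have hr0 := hr.1
    have hode := ode m hm r
    have hm2 : 0 < (m:ℝ)^2 - r^2 := by nlinarith [hr.1, hr.2]
    have hVr : (2 * Jd m r ^ 2 * r + 2 * besselJ m r * Jdd m r * r
          + 4 * besselJ m r * Jd m r) * r
        = 2 * Jd m r ^ 2 * r ^ 2 + 2 * besselJ m r * Jd m r * r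
          + 2 * ((m:ℝ)^2 - r^2) * besselJ m r ^ 2 := by
      linear_combination (2 * besselJ m r) * hode
    have hterm : 0 < 2 * Jd m r ^ 2 * r ^ 2 + 2 * besselJ m r * Jd m r * r
        + 2 * ((m:ℝ)^2 - r^2) * besselJ m r ^ 2 := by
      nlinarith [mul_pos (mul_pos ha hb) hr0, mul_pos hm2 (pow_pos ha 2),
        mul_pos (pow_pos hb 2) (pow_pos hr0 2)]
    nlinarith [hterm, hr0, hVr]
  have hcont : Continuous (fun r : ℝ => (besselJ m r) ^ 2 * r) :=
    ((continuous_besselJ m).pow 2).mul continuous_id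
  refine ⟨fun r hr => ⟨?_, ?_⟩, ?_, ?_⟩
  · rw [hd1]; exact hpos1 r hr
  · rw [hd2]; exact hpos2 r hr
  · refine strictMonoOn_of_deriv_pos (convex_Ioo _ _) hcont.continuousOn fun x hx => ?_
    rw [interior_Ioo] at hx
    rw [hd1]
    exact hpos1 x hx
  · refine strictConvexOn_of_deriv2_pos (convex_Ioo _ _) hcont.continuousOn fun x hx => ?_
    rw [interior_Ioo] at hx
    have hit : deriv^[2] (fun r : ℝ => (besselJ m r) ^ 2 * r)
        = deriv (deriv (fun r : ℝ => (besselJ m r) ^ 2 * r)) := rfl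
    rw [hit, hd2]
    exact hpos2 x hx
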